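/- arXiv:1612.01600 — 2 statements merged into one kernel-verified Lean document; each statement's English description precedes it below -/
import Mathlib

section
/- (Lemma 1, part 1.) Let {G_k}_{k≥0} be a B-strongly connected sequence of directed graphs on n nodes, each containing all self-loops, and let {A_k} be the associated column-stochastic weight matrices. Then there exists a sequence {φ_k}_{k≥0} of stochastic vectors in ℝ^n (entries nonnegative, summing to 1) such that for all k ≥ t ≥ 0 and all i, j ∈ {1,…,n}: |[A_{k:t}]_{ij} − φ_k^i| ≤ 4 λ^{k−t}, where λ = (1 − 1/n^{nB})^{1/B}. -/
open Finset Matrix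

/-- Number of out-neighbors of `j` other than itself, in the digraph with edge set `E`. -/
def outDeg {n : ℕ} (E : Finset (Fin n × Fin n)) (j : Fin n) : ℕ :=
  (Finset.univ.filter fun i => (j, i) ∈ E ∧ i ≠ j).card

/-- Number of in-neighbors of `j` other than itself, in the digraph with edge set `E`. -/
def inDeg {n : ℕ} (E : Finset (Fin n × Fin n)) (j : Fin n) : ℕ :=
  (Finset.univ.filter fun i => (i, j) ∈ E ∧ i ≠ j).card

/-- The column-stochastic weight matrix associated with the edge set `E`:
`A i j = 1/(d_j + 1)` if `(j,i) ∈ E` and `0` otherwise. -/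
noncomputable def weightMatrix {n : ℕ} (E : Finset (Fin n × Fin n)) :
    Matrix (Fin n) (Fin n) ℝ :=
  Matrix.of fun i j => if (j, i) ∈ E then 1 / (outDeg E j + 1) else 0

/-- `prodA A t m = A (t+m) * A (t+m-1) * ⋯ * A t`, i.e. the backward product `A_{(t+m):t}`. -/
noncomputable def prodA {n : ℕ} (A : ℕ → Matrix (Fin n) (Fin n) ℝ) (t : ℕ) :
    ℕ → Matrix (Fin n) (Fin n) ℝ
  | 0 => A t
  | m + 1 => A (t + m + 1) * prodA A t m

/-- The digraph on `Fin n` with edge set `E` is strongly connected. -/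
def StronglyConnected {n : ℕ} (E : Finset (Fin n × Fin n)) : Prop :=
  ∀ i j : Fin n, Relation.ReflTransGen (fun a b => (a, b) ∈ E) i j

/-- The graph sequence `E` is `B`-strongly connected. -/
def BStronglyConnected {n : ℕ} (E : ℕ → Finset (Fin n × Fin n)) (B : ℕ) : Prop :=
  ∀ k : ℕ, StronglyConnected ((Finset.Ico (k * B) ((k + 1) * B)).biUnion E)


section Basic
variable {n : ℕ}

lemma wm_nonneg (E : Finset (Fin n × Fin n)) (i j : Fin n) : 0 ≤ weightMatrix E i j := by
  unfold weightMatrix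
  simp only [Matrix.of_apply]
  split <;> positivity

lemma outDeg_lt (hn : 1 ≤ n) (E : Finset (Fin n × Fin n)) (j : Fin n) : outDeg E j < n := by
  unfold outDeg
  calc (Finset.univ.filter fun i => (j, i) ∈ E ∧ i ≠ j).card
      ≤ (Finset.univ.erase j).card := by
        apply Finset.card_le_card
        intro i hi
        simp only [Finset.mem_filter] at hi
        exact Finset.mem_erase.mpr ⟨hi.2.2, Finset.mem_univ i⟩
    _ < n := by
        rw [Finset.card_erase_of_mem (Finset.mem_univ j)]
        simp only [Finset.card_univ, Fintype.card_fin]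
        omega

lemma wm_lb (hn : 1 ≤ n) (E : Finset (Fin n × Fin n)) (i j : Fin n) (h : (j, i) ∈ E) :
    ((n : ℝ))⁻¹ ≤ weightMatrix E i j := by
  unfold weightMatrix
  simp only [Matrix.of_apply, if_pos h]
  rw [one_div]
  apply inv_anti₀
  · positivity
  · have := outDeg_lt hn E j
    have : (outDeg E j : ℝ) + 1 ≤ (n : ℝ) := by exact_mod_cast this
    linarith

lemma wm_col_sum (E : Finset (Fin n × Fin n)) (j : Fin n) (hj : (j, j) ∈ E) :
    ∑ i, weightMatrix E i j = 1 := by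
  unfold weightMatrix
  simp only [Matrix.of_apply]
  rw [← Finset.sum_filter]
  rw [Finset.sum_const]
  have hcard : (Finset.univ.filter fun i => (j, i) ∈ E).card = outDeg E j + 1 := by
    have hset : (Finset.univ.filter fun i => (j, i) ∈ E)
        = insert j (Finset.univ.filter fun i => (j, i) ∈ E ∧ i ≠ j) := by
      ext i
      simp only [Finset.mem_filter, Finset.mem_insert, Finset.mem_univ, true_and]
      constructor
      · intro h
        by_cases hij : i = j
        · exact Or.inl hij
        · exact Or.inr ⟨h, hij⟩
      · rintro (rfl | ⟨h, _⟩)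
        · exact hj
        · exact h
    rw [hset, Finset.card_insert_of_notMem (by simp), outDeg]
  rw [hcard]
  have : ((outDeg E j : ℝ) + 1) ≠ 0 := by positivity
  rw [nsmul_eq_mul, Nat.cast_add, Nat.cast_one, mul_one_div_cancel this]

variable {B : ℕ} {E : ℕ → Finset (Fin n × Fin n)} {A : ℕ → Matrix (Fin n) (Fin n) ℝ}

lemma prodA_nonneg (hA : ∀ k, A k = weightMatrix (E k)) (t m : ℕ) (i j : Fin n) :
    0 ≤ prodA A t m i j := by
  induction m generalizing i j with
  | zero => rw [prodA, hA]; exact wm_nonneg _ i j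
  | succ m ih =>
    rw [prodA, Matrix.mul_apply]
    apply Finset.sum_nonneg
    intro l _
    have := wm_nonneg (E (t + m + 1)) i l
    rw [← hA] at this
    exact mul_nonneg this (ih l j)

lemma prodA_col_sum (hA : ∀ k, A k = weightMatrix (E k)) (hloop : ∀ k i, (i, i) ∈ E k)
    (t m : ℕ) (j : Fin n) : ∑ i, prodA A t m i j = 1 := by
  induction m generalizing j with
  | zero => rw [prodA]; rw [hA]; exact wm_col_sum _ j (hloop t j)
  | succ m ih =>
    rw [prodA]
    simp only [Matrix.mul_apply]
    rw [Finset.sum_comm]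
    have : ∀ l, ∑ i, A (t + m + 1) i l * prodA A t m l j
        = prodA A t m l j := by
      intro l
      rw [← Finset.sum_mul]
      rw [hA, wm_col_sum _ l (hloop _ l), one_mul]
    simp_rw [this]
    exact ih j

lemma prodA_le_one (hA : ∀ k, A k = weightMatrix (E k)) (hloop : ∀ k i, (i, i) ∈ E k)
    (t m : ℕ) (i j : Fin n) : prodA A t m i j ≤ 1 := by
  have h := prodA_col_sum hA hloop t m j
  have : prodA A t m i j ≤ ∑ i', prodA A t m i' j :=
    Finset.single_le_sum (fun l _ => prodA_nonneg hA t m l j) (Finset.mem_univ i)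
  linarith

lemma prodA_succ_pos (hA : ∀ k, A k = weightMatrix (E k)) (hloop : ∀ k i, (i, i) ∈ E k)
    {t m : ℕ} {i j : Fin n} (h : 0 < prodA A t m i j) : 0 < prodA A t (m + 1) i j := by
  rw [prodA, Matrix.mul_apply]
  have hterm : 0 < A (t + m + 1) i i * prodA A t m i j := by
    apply mul_pos _ h
    rw [hA]
    have hn : 1 ≤ n := Nat.one_le_iff_ne_zero.mpr (by rintro rfl; exact i.elim0)
    have := wm_lb hn (E (t + m + 1)) i i (hloop _ i)
    have h2 : (0 : ℝ) < ((n : ℝ))⁻¹ := by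
      have hn' : (0:ℝ) < n := by exact_mod_cast hn
      positivity
    linarith
  calc (0:ℝ) < A (t + m + 1) i i * prodA A t m i j := hterm
    _ ≤ ∑ l, A (t + m + 1) i l * prodA A t m l j := by
        apply Finset.single_le_sum (f := fun l => A (t + m + 1) i l * prodA A t m l j)
          (fun l _ => mul_nonneg (by rw [hA]; exact wm_nonneg _ i l) (prodA_nonneg hA t m l j))
          (Finset.mem_univ i)

lemma prodA_edge_pos (hA : ∀ k, A k = weightMatrix (E k))
    {t m : ℕ} {l i j : Fin n} (he : (l, i) ∈ E (t + m + 1)) (h : 0 < prodA A t m l j) :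
    0 < prodA A t (m + 1) i j := by
  rw [prodA, Matrix.mul_apply]
  have hn : 1 ≤ n := Nat.one_le_iff_ne_zero.mpr (by rintro rfl; exact i.elim0)
  have hterm : 0 < A (t + m + 1) i l * prodA A t m l j := by
    apply mul_pos _ h
    rw [hA]
    have := wm_lb hn (E (t + m + 1)) i l he
    have h2 : (0 : ℝ) < ((n : ℝ))⁻¹ := by
      have hn' : (0:ℝ) < n := by exact_mod_cast hn
      positivity
    linarith
  calc (0:ℝ) < A (t + m + 1) i l * prodA A t m l j := hterm
    _ ≤ ∑ l', A (t + m + 1) i l' * prodA A t m l' j := by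
        apply Finset.single_le_sum (f := fun l' => A (t + m + 1) i l' * prodA A t m l' j)
          (fun l' _ => mul_nonneg (by rw [hA]; exact wm_nonneg _ i l') (prodA_nonneg hA t m l' j))
          (Finset.mem_univ l)

lemma prodA_diag_pos (hA : ∀ k, A k = weightMatrix (E k)) (hloop : ∀ k i, (i, i) ∈ E k)
    (t m : ℕ) (j : Fin n) : 0 < prodA A t m j j := by
  induction m with
  | zero =>
    rw [prodA, hA]
    have hn : 1 ≤ n := Nat.one_le_iff_ne_zero.mpr (by rintro rfl; exact j.elim0)
    have := wm_lb hn (E t) j j (hloop t j)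
    have h2 : (0 : ℝ) < ((n : ℝ))⁻¹ := by
      have hn' : (0:ℝ) < n := by exact_mod_cast hn
      positivity
    linarith
  | succ m ih => exact prodA_succ_pos hA hloop ih

lemma prodA_mono_pos (hA : ∀ k, A k = weightMatrix (E k)) (hloop : ∀ k i, (i, i) ∈ E k)
    {t m m' : ℕ} (hm : m ≤ m') {i j : Fin n} (h : 0 < prodA A t m i j) :
    0 < prodA A t m' i j := by
  induction m' with
  | zero =>
    have hm0 : m = 0 := Nat.le_zero.mp hm
    subst hm0; exact h
  | succ m' ih =>
    rcases Nat.lt_or_ge m (m' + 1) with hlt | hge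
    · exact prodA_succ_pos hA hloop (ih (by omega))
    · have : m = m' + 1 := by omega
      subst this; exact h

lemma prodA_lb (hA : ∀ k, A k = weightMatrix (E k)) (hn : 1 ≤ n)
    (t m : ℕ) (i j : Fin n) (h : 0 < prodA A t m i j) :
    ((n : ℝ))⁻¹ ^ (m + 1) ≤ prodA A t m i j := by
  induction m generalizing i j with
  | zero =>
    rw [prodA] at h ⊢
    rw [hA] at h ⊢
    by_cases he : (j, i) ∈ E t
    · rw [pow_one]; exact wm_lb hn (E t) i j he
    · exfalso; unfold weightMatrix at h; simp [he] at h
  | succ m ih =>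
    rw [prodA, Matrix.mul_apply] at h ⊢
    have hex : ∃ l, 0 < A (t + m + 1) i l * prodA A t m l j := by
      by_contra hc
      push_neg at hc
      have : ∑ l, A (t + m + 1) i l * prodA A t m l j ≤ 0 :=
        Finset.sum_nonpos (fun l _ => hc l)
      linarith
    obtain ⟨l, hl⟩ := hex
    have hA1 : 0 < A (t + m + 1) i l := by
      rcases lt_or_ge 0 (A (t + m + 1) i l) with h1 | h1
      · exact h1
      · nlinarith [prodA_nonneg hA t m l j]
    have hP1 : 0 < prodA A t m l j := by
      rcases lt_or_ge 0 (prodA A t m l j) with h1 | h1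
      · exact h1
      · nlinarith
    have hAlb : ((n : ℝ))⁻¹ ≤ A (t + m + 1) i l := by
      rw [hA] at hA1 ⊢
      by_cases he : (l, i) ∈ E (t + m + 1)
      · exact wm_lb hn _ i l he
      · exfalso; unfold weightMatrix at hA1; simp [he] at hA1
    calc ((n:ℝ))⁻¹ ^ (m + 1 + 1) = ((n:ℝ))⁻¹ * ((n:ℝ))⁻¹ ^ (m + 1) := by ring
      _ ≤ A (t + m + 1) i l * prodA A t m l j := by
          apply mul_le_mul hAlb (ih l j hP1) (by positivity) (le_trans (by positivity) hAlb)
      _ ≤ ∑ l', A (t + m + 1) i l' * prodA A t m l' j := by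
          apply Finset.single_le_sum (f := fun l' => A (t + m + 1) i l' * prodA A t m l' j)
            (fun l' _ => mul_nonneg (by rw [hA]; exact wm_nonneg _ i l') (prodA_nonneg hA t m l' j))
            (Finset.mem_univ l)

lemma prodA_comp (a b t : ℕ) :
    prodA A t (a + b + 1) = prodA A (t + b + 1) a * prodA A t b := by
  induction a with
  | zero =>
    show prodA A t (0 + b + 1) = _
    rw [Nat.zero_add]
    rfl
  | succ a ih =>
    have h1 : a + 1 + b + 1 = (a + b + 1) + 1 := by omega
    rw [h1, prodA, ih, ← Matrix.mul_assoc]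
    have h2 : t + (a + b + 1) + 1 = (t + b + 1) + a + 1 := by omega
    rw [h2]
    rfl

lemma cross_lemma {α : Type*} (R : α → α → Prop) (S : Finset α) {j i : α}
    (hj : j ∈ S) (h : Relation.ReflTransGen R j i) (hi : i ∉ S) :
    ∃ a b, a ∈ S ∧ b ∉ S ∧ R a b := by
  induction h with
  | refl => exact absurd hj hi
  | @tail c d h1 h2 ih =>
    by_cases hc : c ∈ S
    · exact ⟨c, d, hc, hi, h2⟩
    · exact ih hc

lemma window_pos (hA : ∀ k, A k = weightMatrix (E k)) (hloop : ∀ k i, (i, i) ∈ E k)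
    (hconn : BStronglyConnected E B) (hn : 1 ≤ n) (hB : 1 ≤ B)
    (s : ℕ) (i j : Fin n) : 0 < prodA A s (n * B - 1) i j := by
  classical
  set S : ℕ → Finset (Fin n) := fun m => Finset.univ.filter (fun i => 0 < prodA A s m i j)
    with hS
  have hmem : ∀ m i', i' ∈ S m ↔ 0 < prodA A s m i' j := by
    intro m i'
    simp [hS]
  have hmono : ∀ {m m'}, m ≤ m' → S m ⊆ S m' := by
    intro m m' hmm i' hi'
    rw [hmem] at hi' ⊢
    exact prodA_mono_pos hA hloop hmm hi'
  have hjm : ∀ m, j ∈ S m := fun m => (hmem m j).mpr (prodA_diag_pos hA hloop s m j)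
  set k0 : ℕ := s / B + 1 with hk0
  have hk0B : s < k0 * B := by
    have h1 : B * (s / B) + s % B = s := Nat.div_add_mod s B
    have h1' : B * (s / B) = s / B * B := Nat.mul_comm _ _
    have h2 : s % B < B := Nat.mod_lt s hB
    have h3 : k0 * B = s / B * B + B := by rw [hk0]; ring
    omega
  -- growth through one connectivity block
  have hgrow : ∀ k : ℕ, s < k * B → S (k * B - 1 - s) ≠ Finset.univ →
      (S (k * B - 1 - s)).card < (S ((k + 1) * B - 1 - s)).card := by
    intro k hsk hne
    obtain ⟨i0, hi0⟩ : ∃ i0, i0 ∉ S (k * B - 1 - s) := by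
      by_contra hc
      push_neg at hc
      exact hne (Finset.eq_univ_iff_forall.mpr hc)
    obtain ⟨a, b, ha, hb, hab⟩ := cross_lemma _ (S (k * B - 1 - s))
      (hjm _) (hconn k j i0) hi0
    obtain ⟨w, hw, hEw⟩ := Finset.mem_biUnion.mp hab
    rw [Finset.mem_Ico] at hw
    have hws : s < w := lt_of_lt_of_le hsk hw.1
    -- a is positive at time w - 1
    have ha' : 0 < prodA A s (w - 1 - s) a j := by
      have : a ∈ S (w - 1 - s) := hmono (by omega) ha
      exact (hmem _ a).mp this
    -- edge step to b at time w
    have hb' : 0 < prodA A s (w - s) b j := by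
      have hstep : 0 < prodA A s ((w - 1 - s) + 1) b j := by
        apply prodA_edge_pos hA (l := a) _ ha'
        have : s + (w - 1 - s) + 1 = w := by omega
        rw [this]
        exact hEw
      have : (w - 1 - s) + 1 = w - s := by omega
      rwa [this] at hstep
    have hbmem : b ∈ S ((k + 1) * B - 1 - s) := by
      apply hmono _ ((hmem _ b).mpr hb')
      have hkk : (k+1) * B = k * B + B := by ring
      omega
    apply Finset.card_lt_card
    constructor
    · apply hmono
      have hkk : (k+1) * B = k * B + B := by ring
      omega
    · intro hsub
      exact hb (hsub hbmem)
  -- cards grow along blocks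
  have hcard : ∀ r : ℕ, min n (r + 1) ≤ (S ((k0 + r) * B - 1 - s)).card := by
    intro r
    induction r with
    | zero =>
      have : 0 < (S ((k0 + 0) * B - 1 - s)).card := Finset.card_pos.mpr ⟨j, hjm _⟩
      omega
    | succ r ih =>
      by_cases hu : S ((k0 + r) * B - 1 - s) = Finset.univ
      · have h2 : (k0 + (r + 1)) = (k0 + r + 1) := by omega
        rw [h2]
        have hsub : S ((k0 + r) * B - 1 - s) ⊆ S ((k0 + r + 1) * B - 1 - s) := by
          apply hmono
          have h1 : (k0 + r + 1) * B = (k0 + r) * B + B := by ring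
          omega
        rw [hu] at hsub
        have heq : S ((k0 + r + 1) * B - 1 - s) = Finset.univ :=
          Finset.univ_subset_iff.mp hsub
        rw [heq, Finset.card_univ, Fintype.card_fin]
        omega
      · have hlt : s < (k0 + r) * B := by
          calc s < k0 * B := hk0B
            _ ≤ (k0 + r) * B := Nat.mul_le_mul_right B (by omega)
        have := hgrow (k0 + r) hlt hu
        have hcub : (S ((k0 + r) * B - 1 - s)).card ≤ n := by
          have := Finset.card_le_univ (S ((k0 + r) * B - 1 - s))
          simpa using this
        have hne' : (S ((k0 + r) * B - 1 - s)).card < n := by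
          rcases lt_or_eq_of_le hcub with h | h
          · exact h
          · exfalso
            apply hu
            apply Finset.eq_univ_of_card
            rw [h, Fintype.card_fin]
        have h2 : (k0 + (r + 1)) = (k0 + r + 1) := by omega
        rw [h2]
        omega
    -- note min n (r+2) ≤ card follows
  have hfull : S ((k0 + (n - 1)) * B - 1 - s) = Finset.univ := by
    have h1 := hcard (n - 1)
    have h2 : min n (n - 1 + 1) = n := by omega
    rw [h2] at h1
    apply Finset.eq_univ_of_card
    have := Finset.card_le_univ (S ((k0 + (n - 1)) * B - 1 - s))
    simp only [Finset.card_univ, Fintype.card_fin] at this ⊢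
    omega
  obtain ⟨n', hn'⟩ : ∃ n', n = n' + 1 := ⟨n - 1, by omega⟩
  have hi : i ∈ S (n * B - 1) := by
    apply hmono _ (hfull ▸ Finset.mem_univ i)
    have h1 : k0 * B = s / B * B + B := by rw [hk0]; ring
    have h2 : s / B * B ≤ s := Nat.div_mul_le_self s B
    have h3 : (k0 + (n - 1)) * B = k0 * B + n' * B := by
      rw [show n - 1 = n' from by omega]; ring
    have h4 : n * B = n' * B + B := by rw [hn']; ring
    omega
  exact (hmem _ i).mp hi

lemma window_lb (hA : ∀ k, A k = weightMatrix (E k)) (hloop : ∀ k i, (i, i) ∈ E k)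
    (hconn : BStronglyConnected E B) (hn : 1 ≤ n) (hB : 1 ≤ B)
    (s : ℕ) (i j : Fin n) : ((n : ℝ))⁻¹ ^ (n * B) ≤ prodA A s (n * B - 1) i j := by
  have h1 := prodA_lb hA hn s (n * B - 1) i j (window_pos hA hloop hconn hn hB s i j)
  have h2 : n * B - 1 + 1 = n * B := by
    have : 1 ≤ n * B := Nat.one_le_iff_ne_zero.mpr (by positivity)
    omega
  rwa [h2] at h1

/-- Hajnal-type contraction step. -/
lemma hajnal (hn : 1 ≤ n) (P M : Matrix (Fin n) (Fin n) ℝ) (δ c : ℝ) (i : Fin n)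
    (hδ : ∀ m j, δ ≤ M m j) (hMcol : ∀ j, ∑ m, M m j = 1)
    (hP : ∀ j j', |P i j - P i j'| ≤ c) :
    ∀ j j', |(P * M) i j - (P * M) i j'| ≤ (1 - n * δ) * c := by
  have hc0 : 0 ≤ c := le_trans (abs_nonneg _) (hP i i)
  have hnind : Nonempty (Fin n) := Fin.pos_iff_nonempty.mp (by omega)
  have hne : (Finset.univ : Finset (Fin n)).Nonempty := Finset.univ_nonempty
  set a : ℝ := Finset.univ.inf' hne (fun m => P i m) with ha
  obtain ⟨m0, _, hm0⟩ := Finset.exists_mem_eq_inf' hne (fun m => P i m)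
  have hala : ∀ m, a ≤ P i m := fun m => Finset.inf'_le _ (Finset.mem_univ m)
  have hPa : ∀ m, P i m - a ≤ c := by
    intro m
    have h1 := hP m m0
    have h2 := abs_le.mp h1
    rw [ha, hm0]
    linarith [h2.1, h2.2]
  have key : ∀ j j', (P * M) i j - (P * M) i j' ≤ (1 - n * δ) * c := by
    intro j j'
    have hrw : (P * M) i j - (P * M) i j' = ∑ m, (P i m - a) * (M m j - M m j') := by
      have e1 : ∀ m ∈ Finset.univ, (P i m - a) * (M m j - M m j')
          = (P i m * M m j - P i m * M m j') - (a * M m j - a * M m j') := by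
        intro m _; ring
      rw [Matrix.mul_apply, Matrix.mul_apply]
      rw [Finset.sum_congr rfl e1, Finset.sum_sub_distrib, Finset.sum_sub_distrib,
        Finset.sum_sub_distrib, ← Finset.mul_sum, ← Finset.mul_sum, hMcol, hMcol]
      ring
    have hterm : ∀ m, (P i m - a) * (M m j - M m j')
        ≤ c * (M m j - min (M m j) (M m j')) := by
      intro m
      rcases le_total (M m j) (M m j') with hle | hle
      · rw [min_eq_left hle]
        have h1 : (P i m - a) * (M m j - M m j') ≤ 0 :=
          mul_nonpos_of_nonneg_of_nonpos (by have := hala m; linarith) (by linarith)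
        simpa using h1
      · rw [min_eq_right hle]
        exact mul_le_mul (hPa m) le_rfl (by linarith) hc0
    calc (P * M) i j - (P * M) i j' = ∑ m, (P i m - a) * (M m j - M m j') := hrw
      _ ≤ ∑ m, c * (M m j - min (M m j) (M m j')) := Finset.sum_le_sum (fun m _ => hterm m)
      _ = c * (1 - ∑ m, min (M m j) (M m j')) := by
          rw [← Finset.mul_sum, Finset.sum_sub_distrib, hMcol]
      _ ≤ c * (1 - n * δ) := by
          have hmin : (n : ℝ) * δ ≤ ∑ m, min (M m j) (M m j') := by
            calc (n : ℝ) * δ = ∑ _m : Fin n, δ := by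
                  rw [Finset.sum_const, Finset.card_univ, Fintype.card_fin, nsmul_eq_mul]
              _ ≤ ∑ m, min (M m j) (M m j') :=
                  Finset.sum_le_sum (fun m _ => le_min (hδ m j) (hδ m j'))
          apply mul_le_mul_of_nonneg_left _ hc0
          linarith
      _ = (1 - n * δ) * c := mul_comm _ _
  intro j j'
  rw [abs_sub_le_iff]
  exact ⟨key j j', key j' j⟩

lemma span_bound (hA : ∀ k, A k = weightMatrix (E k)) (hloop : ∀ k i, (i, i) ∈ E k)
    (hconn : BStronglyConnected E B) (hn : 1 ≤ n) (hB : 1 ≤ B) :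
    ∀ m t (i j j' : Fin n), |prodA A t m i j - prodA A t m i j'|
      ≤ (1 - n * ((n : ℝ))⁻¹ ^ (n * B)) ^ ((m + 1) / (n * B)) := by
  intro m
  induction m using Nat.strong_induction_on with
  | _ m ih =>
    intro t i j j'
    have hnB : 1 ≤ n * B := Nat.one_le_iff_ne_zero.mpr (Nat.mul_ne_zero (by omega) (by omega))
    rcases lt_or_ge (m + 1) (n * B) with hlt | hge
    · -- trivial bound by 1
      rw [Nat.div_eq_of_lt hlt, pow_zero]
      have h1 := prodA_nonneg hA t m i j
      have h2 := prodA_nonneg hA t m i j'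
      have h3 := prodA_le_one hA hloop t m i j
      have h4 := prodA_le_one hA hloop t m i j'
      rw [abs_sub_le_iff]
      constructor <;> linarith
    · rcases eq_or_lt_of_le hge with heq | hgt
      · -- m + 1 = n * B : one window, use hajnal with P = 1
        have hm : m = n * B - 1 := by omega
        have hq : (m + 1) / (n * B) = 1 := by rw [← heq, Nat.div_self (by omega)]
        rw [hq, pow_one]
        have hres := hajnal hn 1 (prodA A t m) (((n : ℝ))⁻¹ ^ (n * B)) 1 i
          (fun l j₀ => by rw [hm]; exact window_lb hA hloop hconn hn hB t l j₀)
          (fun j₀ => prodA_col_sum hA hloop t m j₀)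
          (fun j₀ j₀' => by
            have e : ∀ a b : Fin n, (0:ℝ) ≤ (1 : Matrix (Fin n) (Fin n) ℝ) a b ∧
                (1 : Matrix (Fin n) (Fin n) ℝ) a b ≤ 1 := by
              intro a b
              rw [Matrix.one_apply]
              split <;> norm_num
            have e1 := e i j₀
            have e2 := e i j₀'
            rw [abs_sub_le_iff]
            exact ⟨by linarith [e1.1, e1.2, e2.1, e2.2], by linarith [e1.1, e1.2, e2.1, e2.2]⟩) j j'
        rw [one_mul, mul_one] at hres
        exact hres
      · -- m ≥ n * B : split off one window on the right
        have hdecomp : prodA A t m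
            = prodA A (t + n * B) (m - n * B) * prodA A t (n * B - 1) := by
          have h2 : t + (n * B - 1) + 1 = t + n * B := by omega
          have h3 := prodA_comp (A := A) (m - n * B) (n * B - 1) t
          rw [h2] at h3
          rw [show m - n * B + (n * B - 1) + 1 = m from by omega] at h3
          exact h3
        rw [hdecomp]
        have hc := fun i' j₀ j₀' => ih (m - n * B) (by omega) (t + n * B) i' j₀ j₀'
        have hres := hajnal hn (prodA A (t + n * B) (m - n * B)) (prodA A t (n * B - 1))
          (((n : ℝ))⁻¹ ^ (n * B)) ((1 - n * ((n : ℝ))⁻¹ ^ (n * B)) ^ ((m - n * B + 1) / (n * B))) i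
          (fun l j₀ => window_lb hA hloop hconn hn hB t l j₀)
          (fun j₀ => prodA_col_sum hA hloop t (n * B - 1) j₀)
          (hc i) j j'
        have hqq : (m + 1) / (n * B) = (m - n * B + 1) / (n * B) + 1 := by
          rw [Nat.div_eq_sub_div (by omega) (by omega),
            show m + 1 - n * B = m - n * B + 1 from by omega]
        rw [hqq, pow_succ]
        calc |_| ≤ _ := hres
          _ = _ := by ring

lemma seg_bound (P Q : Matrix (Fin n) (Fin n) ℝ) (c : ℝ) (i j j' : Fin n)
    (hQ0 : ∀ a b, 0 ≤ Q a b) (hQcol : ∀ b, ∑ a, Q a b = 1)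
    (hspan : ∀ j₁ j₂, |P i j₁ - P i j₂| ≤ c) :
    |P i j - (P * Q) i j'| ≤ c := by
  have hrw : ∑ m, Q m j' * (P i j - P i m) = P i j - (P * Q) i j' := by
    have e1 : ∀ m ∈ (Finset.univ : Finset (Fin n)), Q m j' * (P i j - P i m)
        = Q m j' * P i j - P i m * Q m j' := fun m _ => by ring
    rw [Finset.sum_congr rfl e1, Finset.sum_sub_distrib, ← Finset.sum_mul, hQcol, one_mul,
      Matrix.mul_apply]
  rw [← hrw]
  calc |∑ m, Q m j' * (P i j - P i m)| ≤ ∑ m, |Q m j' * (P i j - P i m)| :=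
        Finset.abs_sum_le_sum_abs _ _
    _ ≤ ∑ m, Q m j' * c := by
        apply Finset.sum_le_sum
        intro m _
        rw [abs_mul, abs_of_nonneg (hQ0 m j')]
        exact mul_le_mul_of_nonneg_left (hspan j m) (hQ0 m j')
    _ = c := by rw [← Finset.sum_mul, hQcol, one_mul]

lemma numeric_bound {n B : ℕ} (hn2 : 2 ≤ n) (hB : 1 ≤ B) (m : ℕ) :
    (1 - n * ((n : ℝ))⁻¹ ^ (n * B)) ^ ((m + 1) / (n * B))
      ≤ 4 * ((1 - 1 / (n : ℝ) ^ (n * B)) ^ ((1 : ℝ) / B)) ^ m := by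
  have hδeq : 1 / (n : ℝ) ^ (n * B) = ((n : ℝ))⁻¹ ^ (n * B) := by
    rw [one_div, inv_pow]
  rw [hδeq]
  set δ : ℝ := ((n : ℝ))⁻¹ ^ (n * B) with hδdef
  have hn0 : (0 : ℝ) < n := by positivity
  have hn0' : (2 : ℝ) ≤ n := by exact_mod_cast hn2
  have hB0 : (0 : ℝ) < B := by
    have : (1 : ℝ) ≤ B := by exact_mod_cast hB
    linarith
  have hnB2 : 2 ≤ n * B := le_trans hn2 (Nat.le_mul_of_pos_right n (by omega))
  have hinv0 : (0 : ℝ) ≤ (n : ℝ)⁻¹ := by positivity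
  have hinv1 : (n : ℝ)⁻¹ ≤ 1 := by
    rw [inv_le_one_iff₀]
    right; linarith
  have hinvhalf : (n : ℝ)⁻¹ ≤ 1 / 2 := by
    rw [inv_le_comm₀ hn0 (by norm_num)]
    linarith
  have hδpos : 0 < δ := by positivity
  have hδ2 : δ ≤ ((n : ℝ)⁻¹) ^ 2 := pow_le_pow_of_le_one hinv0 hinv1 hnB2
  have hnδ : (n : ℝ) * δ ≤ (n : ℝ)⁻¹ := by
    have h1 : (n : ℝ) * δ ≤ (n : ℝ) * ((n : ℝ)⁻¹) ^ 2 :=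
      mul_le_mul_of_nonneg_left hδ2 (le_of_lt hn0)
    have h2 : (n : ℝ) * ((n : ℝ)⁻¹) ^ 2 = (n : ℝ)⁻¹ := by
      field_simp
    linarith
  have hnδhalf : (n : ℝ) * δ ≤ 1 / 2 := le_trans hnδ hinvhalf
  have hδnδ : δ ≤ (n : ℝ) * δ := by nlinarith
  set μ : ℝ := 1 - δ with hμdef
  have hμ0 : (0 : ℝ) ≤ μ := by simp only [hμdef]; linarith
  have hμ1 : μ ≤ 1 := by simp only [hμdef]; linarith
  have hμn : 1 - (n : ℝ) * δ ≤ μ ^ n := by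
    have := one_add_mul_le_pow (a := -δ) (by linarith) n
    calc 1 - (n : ℝ) * δ = 1 + n * (-δ) := by ring
      _ ≤ (1 + -δ) ^ n := this
      _ = μ ^ n := by rw [hμdef]; ring_nf
  have hμnhalf : (1 : ℝ) / 2 ≤ μ ^ n := by linarith
  set lam : ℝ := μ ^ ((1 : ℝ) / B) with hlamdef
  have hlam0 : 0 ≤ lam := Real.rpow_nonneg hμ0 _
  have hlam1 : lam ≤ 1 := Real.rpow_le_one hμ0 hμ1 (by positivity)
  have hlamL : lam ^ (n * B) = μ ^ n := by
    rw [hlamdef, ← Real.rpow_natCast (μ ^ ((1 : ℝ) / B)) (n * B), ← Real.rpow_mul hμ0,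
      ← Real.rpow_natCast μ n]
    congr 1
    push_cast
    field_simp
  set q : ℕ := (m + 1) / (n * B) with hqdef
  set e : ℕ := (n * B) * q with hedef
  have hstep1 : (1 - (n : ℝ) * δ) ^ q ≤ lam ^ e := by
    calc (1 - (n : ℝ) * δ) ^ q ≤ (μ ^ n) ^ q := pow_le_pow_left₀ (by linarith) hμn q
      _ = lam ^ e := by rw [← hlamL, ← pow_mul]
  have hdm := Nat.div_add_mod (m + 1) (n * B)
  have hmod : (m + 1) % (n * B) < n * B := Nat.mod_lt _ (by omega)
  have he' : e + (m + 1) % (n * B) = m + 1 := by rw [hedef, hqdef]; exact hdm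
  rcases le_or_gt m e with hme | hme
  · have h1 : lam ^ e ≤ lam ^ m := pow_le_pow_of_le_one hlam0 hlam1 hme
    have h2 : 0 ≤ lam ^ m := pow_nonneg hlam0 m
    calc (1 - (n : ℝ) * δ) ^ q ≤ lam ^ e := hstep1
      _ ≤ lam ^ m := h1
      _ ≤ 4 * lam ^ m := by linarith
  · have hd : m - e ≤ n * B := by omega
    have hsplit : lam ^ m = lam ^ e * lam ^ (m - e) := by
      rw [← pow_add]
      congr 1
      omega
    have h1 : lam ^ (n * B) ≤ lam ^ (m - e) := pow_le_pow_of_le_one hlam0 hlam1 hd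
    have h2 : (1 : ℝ) / 2 ≤ lam ^ (m - e) := by rw [hlamL] at h1; linarith
    have h3 : 0 ≤ lam ^ e := pow_nonneg hlam0 e
    have h4 : lam ^ e * (1 / 2) ≤ lam ^ e * lam ^ (m - e) :=
      mul_le_mul_of_nonneg_left h2 h3
    have h5 : lam ^ e ≤ 2 * lam ^ m := by
      rw [hsplit]
      linarith
    have h6 : 0 ≤ lam ^ m := pow_nonneg hlam0 m
    calc (1 - (n : ℝ) * δ) ^ q ≤ lam ^ e := hstep1
      _ ≤ 2 * lam ^ m := h5
      _ ≤ 4 * lam ^ m := by linarith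

end Basic

theorem column_stochastic_product_geometric_convergence
    (n B : ℕ) (hn : 1 ≤ n) (hB : 1 ≤ B)
    (E : ℕ → Finset (Fin n × Fin n)) (hloop : ∀ k i, (i, i) ∈ E k)
    (hconn : BStronglyConnected E B)
    (A : ℕ → Matrix (Fin n) (Fin n) ℝ) (hA : ∀ k, A k = weightMatrix (E k)) :
    ∃ φ : ℕ → Fin n → ℝ,
      (∀ k, (∀ i, 0 ≤ φ k i) ∧ ∑ i, φ k i = 1) ∧
      ∀ t k, t ≤ k → ∀ i j,
        |prodA A t (k - t) i j - φ k i|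
          ≤ 4 * ((1 - 1 / (n : ℝ) ^ (n * B)) ^ ((1 : ℝ) / B)) ^ (k - t) := by
  rcases eq_or_lt_of_le hn with h1 | hn2
  · -- n = 1
    subst h1
    refine ⟨fun _ _ => 1, fun k => ⟨fun i => zero_le_one, by simp⟩, ?_⟩
    intro t k htk i j
    have hsum := prodA_col_sum hA hloop t (k - t) j
    rw [Fin.sum_univ_one] at hsum
    have hi0 : i = 0 := Subsingleton.elim i 0
    rw [hi0, hsum, sub_self, abs_zero]
    have hz : (1 - 1 / ((1 : ℕ) : ℝ) ^ (1 * B)) = 0 := by norm_num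
    rw [hz, Real.zero_rpow (one_div_ne_zero (Nat.cast_ne_zero.mpr (by omega)))]
    positivity
  · -- n ≥ 2
    have hn2' : 2 ≤ n := hn2
    have hnR : (0 : ℝ) < n := by positivity
    refine ⟨fun k i => (∑ j, prodA A 0 k i j) / n, fun k => ⟨?_, ?_⟩, ?_⟩
    · intro i
      exact div_nonneg (Finset.sum_nonneg fun j _ => prodA_nonneg hA 0 k i j) (le_of_lt hnR)
    · rw [← Finset.sum_div, show (∑ i, ∑ j, prodA A 0 k i j) = ∑ j, ∑ i, prodA A 0 k i j
          from Finset.sum_comm,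
        Finset.sum_congr rfl (fun j _ => prodA_col_sum hA hloop 0 k j),
        Finset.sum_const, Finset.card_univ, Fintype.card_fin, nsmul_eq_mul, mul_one]
      field_simp
    · intro t k htk i j
      obtain ⟨Q, hQ0, hQcol, hfact⟩ : ∃ Q : Matrix (Fin n) (Fin n) ℝ,
          (∀ a b, 0 ≤ Q a b) ∧ (∀ b, ∑ a, Q a b = 1) ∧
          prodA A 0 k = prodA A t (k - t) * Q := by
        rcases Nat.eq_zero_or_pos t with ht0 | htpos
        · subst ht0
          refine ⟨1, ?_, ?_, by rw [Nat.sub_zero, mul_one]⟩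
          · intro a b; rw [Matrix.one_apply]; split <;> norm_num
          · intro b; simp [Matrix.one_apply]
        · refine ⟨prodA A 0 (t - 1), fun a b => prodA_nonneg hA 0 (t - 1) a b,
            fun b => prodA_col_sum hA hloop 0 (t - 1) b, ?_⟩
          have h3 := prodA_comp (A := A) (k - t) (t - 1) 0
          rw [show 0 + (t - 1) + 1 = t from by omega] at h3
          rw [show k - t + (t - 1) + 1 = k from by omega] at h3
          exact h3
      set cb : ℝ := (1 - n * ((n : ℝ))⁻¹ ^ (n * B)) ^ ((k - t + 1) / (n * B)) with hcb
      have hspan : ∀ j₁ j₂, |prodA A t (k - t) i j₁ - prodA A t (k - t) i j₂| ≤ cb :=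
        fun j₁ j₂ => span_bound hA hloop hconn hn hB (k - t) t i j₁ j₂
      have hseg : ∀ j', |prodA A t (k - t) i j - (prodA A t (k - t) * Q) i j'| ≤ cb :=
        fun j' => seg_bound _ Q cb i j j' hQ0 hQcol hspan
      have hφ : |prodA A t (k - t) i j - (∑ j', prodA A 0 k i j') / n| ≤ cb := by
        rw [hfact]
        have hdiff : prodA A t (k - t) i j - (∑ j', (prodA A t (k - t) * Q) i j') / n
            = (∑ j', (prodA A t (k - t) i j - (prodA A t (k - t) * Q) i j')) / n := by
          rw [Finset.sum_sub_distrib, Finset.sum_const, Finset.card_univ, Fintype.card_fin,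
            nsmul_eq_mul]
          field_simp
        rw [hdiff, abs_div, abs_of_pos hnR, div_le_iff₀ hnR]
        calc |∑ j', (prodA A t (k - t) i j - (prodA A t (k - t) * Q) i j')|
            ≤ ∑ j', |prodA A t (k - t) i j - (prodA A t (k - t) * Q) i j'| :=
              Finset.abs_sum_le_sum_abs _ _
          _ ≤ ∑ _j' : Fin n, cb := Finset.sum_le_sum (fun j' _ => hseg j')
          _ = cb * n := by
              rw [Finset.sum_const, Finset.card_univ, Fintype.card_fin, nsmul_eq_mul]
              ring
      exact le_trans hφ (numeric_bound hn2' hB (k - t))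
end

section
/- (Lemma 1, part 2.) Let {G_k}_{k≥0} be a sequence of directed graphs on n nodes, each containing all self-loops, such that every G_k is regular (every node has the same out-degree and in-degree, so each A_k is doubly stochastic) and strongly connected, and let {A_k} be the associated column-stochastic weight matrices. Then there exists a sequence {φ_k}_{k≥0} of stochastic vectors in ℝ^n such that for all k ≥ t ≥ 0 and all i, j ∈ {1,…,n}: |[A_{k:t}]_{ij} − φ_k^i| ≤ √2 · (1 − 1/(4n³))^{k−t}. -/
open Finset Matrix

private lemma var_identity (n : ℕ) (w x : Fin n → ℝ) :
    ∑ j, ∑ l, w j * w l * (x j - x l)^2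
      = 2 * ((∑ j, w j * x j^2) * (∑ j, w j) - (∑ j, w j * x j)^2) := by
  have hfirst : ∑ j, ∑ l, ((w j * x j^2) * w l - (w j * x j) * (w l * x l))
      = (∑ j, w j * x j^2) * (∑ j, w j) - (∑ j, w j * x j)^2 := by
    rw [pow_two, Finset.sum_mul_sum, Finset.sum_mul_sum, ← Finset.sum_sub_distrib]
    exact Finset.sum_congr rfl fun j _ => Finset.sum_sub_distrib _ _
  have hswap : ∑ j, ∑ l, ((w l * x l^2) * w j - (w l * x l) * (w j * x j))
      = ∑ j, ∑ l, ((w j * x j^2) * w l - (w j * x j) * (w l * x l)) := Finset.sum_comm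
  calc ∑ j, ∑ l, w j * w l * (x j - x l)^2
      = ∑ j, ∑ l, (((w j * x j^2) * w l - (w j * x j) * (w l * x l))
          + ((w l * x l^2) * w j - (w l * x l) * (w j * x j))) := by
        apply Finset.sum_congr rfl; intro j _
        apply Finset.sum_congr rfl; intro l _
        ring
    _ = ∑ j, ∑ l, ((w j * x j^2) * w l - (w j * x j) * (w l * x l))
        + ∑ j, ∑ l, ((w l * x l^2) * w j - (w l * x l) * (w j * x j)) := by
        rw [← Finset.sum_add_distrib]
        exact Finset.sum_congr rfl fun j _ => Finset.sum_add_distrib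
    _ = 2 * ((∑ j, w j * x j^2) * (∑ j, w j) - (∑ j, w j * x j)^2) := by
        rw [hswap, hfirst]; ring

private lemma pair_expand (n : ℕ) (f : Fin n → ℝ) (g : ℕ → ℝ) :
    ∑ m ∈ Finset.range (n-1), g m^2 *
        (2 * ((∑ a ∈ Finset.univ.filter (fun a : Fin n => (a:ℕ) ≤ m), f a)
            * (∑ b ∈ Finset.univ.filter (fun b : Fin n => m < (b:ℕ)), f b)))
      = ∑ a, ∑ b, f a * f b * ∑ m ∈ Finset.Ico (min (a:ℕ) (b:ℕ)) (max (a:ℕ) (b:ℕ)), g m^2 := by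
  classical
  have hrect : ∀ m, ∀ (s t : Finset (Fin n)),
      ∑ a ∈ s, ∑ b ∈ t, f a * f b * g m ^ 2 = (∑ a ∈ s, f a) * (∑ b ∈ t, f b) * g m^2 := by
    intro m s t
    rw [Finset.sum_mul_sum, Finset.sum_mul]
    exact Finset.sum_congr rfl fun a _ => (Finset.sum_mul _ _ _).symm
  have key : ∀ m, ∑ a : Fin n, ∑ b : Fin n,
      (if ((a:ℕ) ≤ m ∧ m < (b:ℕ)) ∨ ((b:ℕ) ≤ m ∧ m < (a:ℕ)) then f a * f b * g m^2 else 0)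
      = g m^2 * (2 * ((∑ a ∈ Finset.univ.filter (fun a : Fin n => (a:ℕ) ≤ m), f a)
            * (∑ b ∈ Finset.univ.filter (fun b : Fin n => m < (b:ℕ)), f b))) := by
    intro m
    rw [← Finset.sum_filter_add_sum_filter_not Finset.univ (fun a : Fin n => (a:ℕ) ≤ m)]
    have h1 : ∑ a ∈ Finset.univ.filter (fun a : Fin n => (a:ℕ) ≤ m), ∑ b : Fin n,
        (if ((a:ℕ) ≤ m ∧ m < (b:ℕ)) ∨ ((b:ℕ) ≤ m ∧ m < (a:ℕ)) then f a * f b * g m^2 else 0)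
        = ∑ a ∈ Finset.univ.filter (fun a : Fin n => (a:ℕ) ≤ m),
            ∑ b ∈ Finset.univ.filter (fun b : Fin n => m < (b:ℕ)), f a * f b * g m^2 := by
      apply Finset.sum_congr rfl; intro a ha
      rw [Finset.mem_filter] at ha
      rw [Finset.sum_filter]
      apply Finset.sum_congr rfl; intro b _
      exact if_congr (by omega) rfl rfl
    have h2 : ∑ a ∈ Finset.univ.filter (fun a : Fin n => ¬ (a:ℕ) ≤ m), ∑ b : Fin n,
        (if ((a:ℕ) ≤ m ∧ m < (b:ℕ)) ∨ ((b:ℕ) ≤ m ∧ m < (a:ℕ)) then f a * f b * g m^2 else 0)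
        = ∑ a ∈ Finset.univ.filter (fun a : Fin n => m < (a:ℕ)),
            ∑ b ∈ Finset.univ.filter (fun b : Fin n => (b:ℕ) ≤ m), f a * f b * g m^2 := by
      rw [show (Finset.univ.filter (fun a : Fin n => ¬ (a:ℕ) ≤ m))
          = Finset.univ.filter (fun a : Fin n => m < (a:ℕ)) by
        apply Finset.filter_congr; intro a _; simp [not_le]]
      apply Finset.sum_congr rfl; intro a ha
      rw [Finset.mem_filter] at ha
      rw [Finset.sum_filter]
      apply Finset.sum_congr rfl; intro b _
      exact if_congr (by omega) rfl rfl
    rw [h1, h2, hrect, hrect]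
    ring
  calc ∑ m ∈ Finset.range (n-1), g m^2 *
        (2 * ((∑ a ∈ Finset.univ.filter (fun a : Fin n => (a:ℕ) ≤ m), f a)
            * (∑ b ∈ Finset.univ.filter (fun b : Fin n => m < (b:ℕ)), f b)))
      = ∑ m ∈ Finset.range (n-1), ∑ a : Fin n, ∑ b : Fin n,
          (if ((a:ℕ) ≤ m ∧ m < (b:ℕ)) ∨ ((b:ℕ) ≤ m ∧ m < (a:ℕ)) then f a * f b * g m^2 else 0) :=
        Finset.sum_congr rfl fun m _ => (key m).symm
    _ = ∑ a : Fin n, ∑ b : Fin n, ∑ m ∈ Finset.range (n-1),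
          (if ((a:ℕ) ≤ m ∧ m < (b:ℕ)) ∨ ((b:ℕ) ≤ m ∧ m < (a:ℕ)) then f a * f b * g m^2 else 0) := by
        rw [Finset.sum_comm]
        exact Finset.sum_congr rfl fun a _ => Finset.sum_comm
    _ = ∑ a, ∑ b, f a * f b * ∑ m ∈ Finset.Ico (min (a:ℕ) (b:ℕ)) (max (a:ℕ) (b:ℕ)), g m^2 := by
        apply Finset.sum_congr rfl; intro a _
        apply Finset.sum_congr rfl; intro b _
        have hIco : Finset.Ico (min (a:ℕ) (b:ℕ)) (max (a:ℕ) (b:ℕ))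
            = (Finset.range (n-1)).filter
                (fun m => ((a:ℕ) ≤ m ∧ m < (b:ℕ)) ∨ ((b:ℕ) ≤ m ∧ m < (a:ℕ))) := by
          ext m
          simp only [Finset.mem_Ico, Finset.mem_filter, Finset.mem_range]
          have := a.isLt; have := b.isLt
          omega
        rw [hIco, Finset.sum_filter, Finset.mul_sum]
        exact Finset.sum_congr rfl fun m _ => by rw [mul_ite, mul_zero]

private lemma sum_sq_sub_const {n : ℕ} (x : Fin n → ℝ) (c : ℝ) :
    ∑ i, (x i - c)^2 = ∑ i, x i^2 - 2*c*(∑ i, x i) + n*c^2 := by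
  have h : ∀ i : Fin n, (x i - c)^2 = x i^2 - 2*c*x i + c^2 := fun i => by ring
  simp only [h]
  rw [Finset.sum_add_distrib, Finset.sum_sub_distrib, ← Finset.mul_sum, Finset.sum_const,
    Finset.card_univ, Fintype.card_fin, nsmul_eq_mul]

private lemma cut_bound (n : ℕ) (A : Matrix (Fin n) (Fin n) ℝ)
    (h0 : ∀ i j, 0 ≤ A i j)
    (hrow : ∀ i, ∑ j, A i j = 1)
    (hγ : ∀ i j, A i j ≠ 0 → 1 / (n:ℝ) ≤ A i j)
    (hcut : ∀ S : Finset (Fin n), S.Nonempty → S ≠ Finset.univ →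
      ∃ i, (∃ j ∈ S, A i j ≠ 0) ∧ ∃ j ∈ Finset.univ \ S, A i j ≠ 0)
    (σ : Equiv.Perm (Fin n)) (m : ℕ) (hm : m + 1 < n) :
    1/(n:ℝ) ≤ 2 * ∑ i, ((∑ a ∈ Finset.univ.filter (fun a : Fin n => (a:ℕ) ≤ m), A i (σ a))
      * (∑ b ∈ Finset.univ.filter (fun b : Fin n => m < (b:ℕ)), A i (σ b))) := by
  classical
  set S : Finset (Fin n) := (Finset.univ.filter fun a : Fin n => (a:ℕ) ≤ m).image σ with hSdef
  have hSne : S.Nonempty := ⟨σ ⟨0, by omega⟩, Finset.mem_image_of_mem σ (by simp)⟩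
  have hSuniv : S ≠ Finset.univ := by
    intro h
    have hmem : σ ⟨m+1, by omega⟩ ∈ S := h ▸ Finset.mem_univ _
    rw [hSdef, Finset.mem_image] at hmem
    obtain ⟨a, ha, hae⟩ := hmem
    have := σ.injective hae
    subst this
    simp at ha
  obtain ⟨i, ⟨j₁, hj₁S, hj₁⟩, ⟨j₂, hj₂S, hj₂⟩⟩ := hcut S hSne hSuniv
  have hPj : ∑ a ∈ Finset.univ.filter (fun a : Fin n => (a:ℕ) ≤ m), A i (σ a)
      = ∑ j ∈ S, A i j := by
    rw [hSdef, Finset.sum_image (fun a _ b _ h => σ.injective h)]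
  have hsplit : (∑ a ∈ Finset.univ.filter (fun a : Fin n => (a:ℕ) ≤ m), A i (σ a))
      + (∑ b ∈ Finset.univ.filter (fun b : Fin n => m < (b:ℕ)), A i (σ b)) = 1 := by
    rw [show (Finset.univ.filter (fun b : Fin n => m < (b:ℕ)))
        = Finset.univ.filter (fun b : Fin n => ¬ (b:ℕ) ≤ m) by
      apply Finset.filter_congr; intro a _; simp [not_le]]
    rw [Finset.sum_filter_add_sum_filter_not]
    rw [Equiv.sum_comp σ (A i)]
    exact hrow i
  have hQj : ∑ b ∈ Finset.univ.filter (fun b : Fin n => m < (b:ℕ)), A i (σ b)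
      = ∑ j ∈ Finset.univ \ S, A i j := by
    have h1 : ∑ j ∈ Finset.univ \ S, A i j = 1 - ∑ j ∈ S, A i j := by
      rw [Finset.sum_sdiff_eq_sub (Finset.subset_univ S), hrow i]
    rw [h1, ← hPj]
    linarith [hsplit]
  have hP1 : 1/(n:ℝ) ≤ ∑ a ∈ Finset.univ.filter (fun a : Fin n => (a:ℕ) ≤ m), A i (σ a) := by
    rw [hPj]
    exact le_trans (hγ i j₁ hj₁) (Finset.single_le_sum (fun j _ => h0 i j) hj₁S)
  have hQ1 : 1/(n:ℝ) ≤ ∑ b ∈ Finset.univ.filter (fun b : Fin n => m < (b:ℕ)), A i (σ b) := by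
    rw [hQj]
    exact le_trans (hγ i j₂ hj₂) (Finset.single_le_sum (fun j _ => h0 i j) hj₂S)
  have hterm : 1/(n:ℝ) ≤ 2 * ((∑ a ∈ Finset.univ.filter (fun a : Fin n => (a:ℕ) ≤ m), A i (σ a))
      * (∑ b ∈ Finset.univ.filter (fun b : Fin n => m < (b:ℕ)), A i (σ b))) := by
    have hγ0 : (0:ℝ) ≤ 1/(n:ℝ) := by positivity
    nlinarith [mul_nonneg (sub_nonneg.2 hP1) (sub_nonneg.2 hQ1)]
  refine le_trans hterm ?_
  have : ∀ i' : Fin n, (0:ℝ) ≤ (∑ a ∈ Finset.univ.filter (fun a : Fin n => (a:ℕ) ≤ m), A i' (σ a))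
      * (∑ b ∈ Finset.univ.filter (fun b : Fin n => m < (b:ℕ)), A i' (σ b)) :=
    fun i' => mul_nonneg (Finset.sum_nonneg fun a _ => h0 _ _) (Finset.sum_nonneg fun b _ => h0 _ _)
  have := Finset.single_le_sum (fun i' (_ : i' ∈ Finset.univ) => this i') (Finset.mem_univ i)
  linarith

private lemma contraction (n : ℕ) (hn : 1 ≤ n) (A : Matrix (Fin n) (Fin n) ℝ)
    (h0 : ∀ i j, 0 ≤ A i j)
    (hrow : ∀ i, ∑ j, A i j = 1)
    (hcol : ∀ j, ∑ i, A i j = 1)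
    (hγ : ∀ i j, A i j ≠ 0 → 1 / (n:ℝ) ≤ A i j)
    (hcut : ∀ S : Finset (Fin n), S.Nonempty → S ≠ Finset.univ →
      ∃ i, (∃ j ∈ S, A i j ≠ 0) ∧ ∃ j ∈ Finset.univ \ S, A i j ≠ 0)
    (x : Fin n → ℝ) (c : ℝ) (hc : (n:ℝ) * c = ∑ j, x j) :
    ∑ i, (∑ j, A i j * x j - c)^2 ≤ (1 - 1/(2*(n:ℝ)^3)) * ∑ i, (x i - c)^2 := by
  classical
  set σ := Tuple.sort x with hσdef
  have hy : Monotone (x ∘ σ) := Tuple.monotone_sort x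
  set Y : ℕ → ℝ := fun a => (x ∘ σ) ⟨min a (n-1), by omega⟩ with hYdef
  have hYmono : Monotone Y := by
    intro a b hab
    exact hy (by simp [Fin.le_def]; omega)
  have hYfin : ∀ a : Fin n, Y (a : ℕ) = x (σ a) := by
    intro a
    have := a.isLt
    exact congrArg (x ∘ σ) (Fin.ext (by simp; omega))
  set g : ℕ → ℝ := fun m => Y (m+1) - Y m with hgdef
  have hg : ∀ m, 0 ≤ g m := fun m => sub_nonneg.2 (hYmono (Nat.le_succ m))
  have htel : ∀ k, ∑ m ∈ Finset.range k, g m = Y k - Y 0 := fun k => Finset.sum_range_sub Y k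
  -- pair bound
  have hpair : ∀ a b : Fin n,
      ∑ m ∈ Finset.Ico (min (a:ℕ) (b:ℕ)) (max (a:ℕ) (b:ℕ)), g m ^ 2
        ≤ (x (σ a) - x (σ b))^2 := by
    have key : ∀ a b : Fin n, (a:ℕ) ≤ (b:ℕ) →
        ∑ m ∈ Finset.Ico (a:ℕ) (b:ℕ), g m ^ 2 ≤ (x (σ b) - x (σ a))^2 := by
      intro a b hab
      have hsum : ∑ m ∈ Finset.Ico (a:ℕ) (b:ℕ), g m = x (σ b) - x (σ a) := by
        rw [Finset.sum_Ico_eq_sub _ hab, htel, htel, hYfin, hYfin]; ring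
      calc ∑ m ∈ Finset.Ico (a:ℕ) (b:ℕ), g m ^ 2
          ≤ (∑ m ∈ Finset.Ico (a:ℕ) (b:ℕ), g m)^2 :=
            Finset.sum_sq_le_sq_sum_of_nonneg (fun m _ => hg m)
        _ = (x (σ b) - x (σ a))^2 := by rw [hsum]
    intro a b
    rcases le_total (a:ℕ) (b:ℕ) with h | h
    · rw [min_eq_left h, max_eq_right h,
        show (x (σ a) - x (σ b))^2 = (x (σ b) - x (σ a))^2 by ring]
      exact key a b h
    · rw [min_eq_right h, max_eq_left h]
      exact key b a h
  -- per-i lower bound on the pair sum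
  have hA : ∀ i : Fin n,
      ∑ m ∈ Finset.range (n-1), g m^2 *
        (2 * ((∑ a ∈ Finset.univ.filter (fun a : Fin n => (a:ℕ) ≤ m), A i (σ a))
            * (∑ b ∈ Finset.univ.filter (fun b : Fin n => m < (b:ℕ)), A i (σ b))))
      ≤ ∑ a, ∑ b, A i (σ a) * A i (σ b) * (x (σ a) - x (σ b))^2 := by
    intro i
    rw [pair_expand n (fun a => A i (σ a)) g]
    apply Finset.sum_le_sum; intro a _
    apply Finset.sum_le_sum; intro b _
    exact mul_le_mul_of_nonneg_left (hpair a b) (mul_nonneg (h0 _ _) (h0 _ _))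
  -- identify the total pair sum with the decrease
  have hsum_i : ∑ i : Fin n, ∑ a, ∑ b, A i (σ a) * A i (σ b) * (x (σ a) - x (σ b))^2
      = 2 * (∑ j, x j^2 - ∑ i, (∑ j, A i j * x j)^2) := by
    have hre : ∀ i : Fin n, ∑ a, ∑ b, A i (σ a) * A i (σ b) * (x (σ a) - x (σ b))^2
        = ∑ j, ∑ l, A i j * A i l * (x j - x l)^2 := by
      intro i
      have hinner : ∀ a : Fin n, ∑ b, A i (σ a) * A i (σ b) * (x (σ a) - x (σ b))^2
          = ∑ l, A i (σ a) * A i l * (x (σ a) - x l)^2 :=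
        fun a => Equiv.sum_comp σ (fun l => A i (σ a) * A i l * (x (σ a) - x l)^2)
      rw [Finset.sum_congr rfl fun a _ => hinner a]
      exact Equiv.sum_comp σ (fun j => ∑ l, A i j * A i l * (x j - x l)^2)
    have hvar : ∀ i : Fin n, ∑ j, ∑ l, A i j * A i l * (x j - x l)^2
        = 2 * ((∑ j, A i j * x j^2) - (∑ j, A i j * x j)^2) := by
      intro i
      rw [var_identity n (A i) x, hrow i, mul_one]
    have hSx : ∑ i : Fin n, ∑ j, A i j * x j^2 = ∑ j, x j^2 := by
      rw [Finset.sum_comm]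
      apply Finset.sum_congr rfl; intro j _
      rw [← Finset.sum_mul, hcol j, one_mul]
    calc ∑ i : Fin n, ∑ a, ∑ b, A i (σ a) * A i (σ b) * (x (σ a) - x (σ b))^2
        = ∑ i : Fin n, 2 * ((∑ j, A i j * x j^2) - (∑ j, A i j * x j)^2) := by
          exact Finset.sum_congr rfl fun i _ => by rw [hre i, hvar i]
      _ = 2 * (∑ j, x j^2 - ∑ i, (∑ j, A i j * x j)^2) := by
          rw [← Finset.mul_sum, Finset.sum_sub_distrib, hSx]
  -- main decrease bound
  have hDecLB : (1/(n:ℝ)) * ∑ m ∈ Finset.range (n-1), g m^2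
      ≤ 2 * (∑ j, x j^2 - ∑ i, (∑ j, A i j * x j)^2) := by
    rw [Finset.mul_sum]
    calc ∑ m ∈ Finset.range (n-1), (1/(n:ℝ)) * g m^2
        ≤ ∑ m ∈ Finset.range (n-1), g m^2 *
            (2 * ∑ i, ((∑ a ∈ Finset.univ.filter (fun a : Fin n => (a:ℕ) ≤ m), A i (σ a))
              * (∑ b ∈ Finset.univ.filter (fun b : Fin n => m < (b:ℕ)), A i (σ b)))) := by
          apply Finset.sum_le_sum; intro m hm
          rw [Finset.mem_range] at hm
          rw [mul_comm (g m ^ 2)]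
          exact mul_le_mul_of_nonneg_right
            (cut_bound n A h0 hrow hγ hcut σ m (by omega)) (sq_nonneg _)
      _ = ∑ i : Fin n, ∑ m ∈ Finset.range (n-1), g m^2 *
            (2 * ((∑ a ∈ Finset.univ.filter (fun a : Fin n => (a:ℕ) ≤ m), A i (σ a))
              * (∑ b ∈ Finset.univ.filter (fun b : Fin n => m < (b:ℕ)), A i (σ b)))) := by
          rw [Finset.sum_comm]
          apply Finset.sum_congr rfl; intro m _
          rw [Finset.mul_sum, Finset.mul_sum]
      _ ≤ ∑ i : Fin n, ∑ a, ∑ b, A i (σ a) * A i (σ b) * (x (σ a) - x (σ b))^2 :=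
          Finset.sum_le_sum fun i _ => hA i
      _ = 2 * (∑ j, x j^2 - ∑ i, (∑ j, A i j * x j)^2) := hsum_i
  -- variance bounds
  have hn' : (1:ℝ) ≤ (n:ℝ) := by exact_mod_cast hn
  have hnpos : (0:ℝ) < (n:ℝ) := by linarith
  have hG0 : (0:ℝ) ≤ ∑ m ∈ Finset.range (n-1), g m^2 :=
    Finset.sum_nonneg fun m _ => sq_nonneg _
  have hΔG : (Y (n-1) - Y 0)^2 ≤ ((n-1 : ℕ):ℝ) * ∑ m ∈ Finset.range (n-1), g m^2 := by
    rw [← htel (n-1)]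
    have := sq_sum_le_card_mul_sum_sq (s := Finset.range (n-1)) (f := g)
    rwa [Finset.card_range] at this
  have hxb : ∀ j, Y 0 ≤ x j ∧ x j ≤ Y (n-1) := by
    intro j
    have h1 : x j = Y ((σ.symm j : Fin n) : ℕ) := by
      rw [hYfin (σ.symm j), Equiv.apply_symm_apply]
    constructor
    · rw [h1]; exact hYmono (Nat.zero_le _)
    · rw [h1]
      exact hYmono (by have := (σ.symm j).isLt; omega)
  have hcb : Y 0 ≤ c ∧ c ≤ Y (n-1) := by
    have hlo : (n:ℝ) * Y 0 ≤ ∑ j, x j := by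
      calc (n:ℝ) * Y 0 = ∑ _j : Fin n, Y 0 := by
            rw [Finset.sum_const, Finset.card_univ, Fintype.card_fin, nsmul_eq_mul]
        _ ≤ ∑ j, x j := Finset.sum_le_sum fun j _ => (hxb j).1
    have hhi : ∑ j, x j ≤ (n:ℝ) * Y (n-1) := by
      calc ∑ j, x j ≤ ∑ _j : Fin n, Y (n-1) := Finset.sum_le_sum fun j _ => (hxb j).2
        _ = (n:ℝ) * Y (n-1) := by
            rw [Finset.sum_const, Finset.card_univ, Fintype.card_fin, nsmul_eq_mul]
    constructor
    · nlinarith [hc]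
    · nlinarith [hc]
  have hVΔ : ∑ i, (x i - c)^2 ≤ (n:ℝ) * (Y (n-1) - Y 0)^2 := by
    calc ∑ i, (x i - c)^2 ≤ ∑ _i : Fin n, (Y (n-1) - Y 0)^2 := by
          apply Finset.sum_le_sum; intro i _
          apply sq_le_sq'
          · linarith [(hxb i).1, hcb.2]
          · linarith [(hxb i).2, hcb.1]
      _ = (n:ℝ) * (Y (n-1) - Y 0)^2 := by
          rw [Finset.sum_const, Finset.card_univ, Fintype.card_fin, nsmul_eq_mul]
  -- algebraic finish
  have hpres : ∑ i : Fin n, ∑ j, A i j * x j = ∑ j, x j := by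
    rw [Finset.sum_comm]
    apply Finset.sum_congr rfl; intro j _
    rw [← Finset.sum_mul, hcol j, one_mul]
  have hVid : ∑ i, (x i - c)^2 = ∑ i, x i^2 - 2*c*(∑ i, x i) + n*c^2 := sum_sq_sub_const x c
  have hV'id : ∑ i, (∑ j, A i j * x j - c)^2
      = ∑ i, (∑ j, A i j * x j)^2 - 2*c*(∑ i, ∑ j, A i j * x j) + n*c^2 :=
    sum_sq_sub_const (fun i => ∑ j, A i j * x j) c
  have hDec' : ∑ i, (x i - c)^2 - ∑ i, (∑ j, A i j * x j - c)^2
      = ∑ j, x j^2 - ∑ i, (∑ j, A i j * x j)^2 := by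
    rw [hVid, hV'id, hpres]; ring
  have hcast : ((n-1 : ℕ):ℝ) ≤ (n:ℝ) := by
    have : (n-1 : ℕ) ≤ n := Nat.sub_le n 1
    exact_mod_cast this
  set G := ∑ m ∈ Finset.range (n-1), g m^2 with hGdef
  set Dec := ∑ j, x j^2 - ∑ i, (∑ j, A i j * x j)^2 with hDecdef
  have hDec0 : 0 ≤ Dec := by
    have := mul_nonneg (show (0:ℝ) ≤ 1/(n:ℝ) by positivity) hG0
    linarith
  have hGn : G ≤ (n:ℝ) * (2 * Dec) := by
    have h1 : G = (n:ℝ) * ((1/(n:ℝ)) * G) := by field_simp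
    rw [h1]
    exact mul_le_mul_of_nonneg_left hDecLB (le_of_lt hnpos)
  have hfin : ∑ i, (x i - c)^2 ≤ 2*(n:ℝ)^3 * Dec := by
    have s1 : ∑ i, (x i - c)^2 ≤ (n:ℝ) * (((n-1:ℕ):ℝ) * G) :=
      le_trans hVΔ (mul_le_mul_of_nonneg_left hΔG (le_of_lt hnpos))
    have s2 : ((n-1:ℕ):ℝ) * G ≤ (n:ℝ) * G := mul_le_mul_of_nonneg_right hcast hG0
    have s3 : (n:ℝ) * G ≤ (n:ℝ) * ((n:ℝ) * (2 * Dec)) :=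
      mul_le_mul_of_nonneg_left hGn (le_of_lt hnpos)
    have s4 : (n:ℝ) * (((n-1:ℕ):ℝ) * G) ≤ (n:ℝ) * ((n:ℝ) * G) :=
      mul_le_mul_of_nonneg_left s2 (le_of_lt hnpos)
    have s5 : (n:ℝ) * ((n:ℝ) * G) ≤ (n:ℝ) * ((n:ℝ) * ((n:ℝ) * (2 * Dec))) :=
      mul_le_mul_of_nonneg_left s3 (le_of_lt hnpos)
    have : (n:ℝ) * ((n:ℝ) * ((n:ℝ) * (2 * Dec))) = 2*(n:ℝ)^3 * Dec := by ring
    linarith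
  have h2n3 : (0:ℝ) < 2*(n:ℝ)^3 := by positivity
  have hdiv : (1/(2*(n:ℝ)^3)) * ∑ i, (x i - c)^2 ≤ Dec := by
    rw [div_mul_eq_mul_div, one_mul, div_le_iff₀ h2n3]
    linarith [hfin]
  have hgoal : (1 - 1/(2*(n:ℝ)^3)) * ∑ i, (x i - c)^2
      = ∑ i, (x i - c)^2 - (1/(2*(n:ℝ)^3)) * ∑ i, (x i - c)^2 := by ring
  rw [hgoal]
  linarith [hDec', hdiv]

private lemma crossing {α : Type*} (r : α → α → Prop) (p : α → Prop) :
    ∀ {a b : α}, Relation.ReflTransGen r a b → p a → ¬ p b →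
      ∃ u v, p u ∧ ¬ p v ∧ r u v := by
  intro a b h
  induction h with
  | refl => intro ha hb; exact absurd ha hb
  | @tail b c h' hr ih =>
    intro ha hc
    by_cases hb : p b
    · exact ⟨b, c, hb, hc, hr⟩
    · exact ih ha hb

/-- Good properties of a doubly stochastic connectivity matrix. -/
def GoodMatrix (n : ℕ) (A : Matrix (Fin n) (Fin n) ℝ) : Prop :=
  (∀ i j, 0 ≤ A i j) ∧ (∀ i, ∑ j, A i j = 1) ∧ (∀ j, ∑ i, A i j = 1) ∧
  (∀ i j, A i j ≠ 0 → 1 / (n:ℝ) ≤ A i j) ∧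
  (∀ S : Finset (Fin n), S.Nonempty → S ≠ Finset.univ →
    ∃ i, (∃ j ∈ S, A i j ≠ 0) ∧ ∃ j ∈ Finset.univ \ S, A i j ≠ 0)

private lemma iterate_bound (n : ℕ) (hn : 1 ≤ n) (A : ℕ → Matrix (Fin n) (Fin n) ℝ)
    (hyp : ∀ k, GoodMatrix n (A k)) (t : ℕ) (j : Fin n) :
    ∀ m, (∑ i, prodA A t m i j = 1) ∧
      ∑ i, (prodA A t m i j - 1/(n:ℝ))^2 ≤ (1 - 1/(2*(n:ℝ)^3))^(m+1) := by
  have hn' : (1:ℝ) ≤ (n:ℝ) := by exact_mod_cast hn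
  have hnne : (n:ℝ) ≠ 0 := by intro h; rw [h] at hn'; linarith
  have hq0 : (0:ℝ) ≤ 1 - 1/(2*(n:ℝ)^3) := by
    have hcube : (1:ℝ) ≤ (n:ℝ)^3 := one_le_pow₀ hn'
    have h2 : (2:ℝ) ≤ 2*(n:ℝ)^3 := by nlinarith
    have := one_div_le_one_div_of_le (by norm_num : (0:ℝ) < 2) h2
    linarith [this]
  intro m
  induction m with
  | zero =>
    constructor
    · exact (hyp t).2.2.1 j
    · show ∑ i, (A t i j - 1/(n:ℝ))^2 ≤ (1 - 1/(2*(n:ℝ)^3))^(0+1)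
      have hc : (n:ℝ) * (1/(n:ℝ)) = ∑ l : Fin n, (if l = j then (1:ℝ) else 0) := by
        rw [Finset.sum_ite_eq' Finset.univ j (fun _ => (1:ℝ))]
        simp [hnne]
      have hcontr := contraction n hn (A t) (hyp t).1 (hyp t).2.1 (hyp t).2.2.1
        (hyp t).2.2.2.1 (hyp t).2.2.2.2 (fun l => if l = j then (1:ℝ) else 0) (1/(n:ℝ)) hc
      have hAe : ∀ i, ∑ l, A t i l * (if l = j then (1:ℝ) else 0) = A t i j := by
        intro i
        rw [Finset.sum_congr rfl (fun l _ => by rw [mul_ite, mul_one, mul_zero])]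
        exact Finset.sum_ite_eq' Finset.univ j (fun l => A t i l) |>.trans (by simp)
      rw [Finset.sum_congr rfl (fun i _ => by rw [hAe i])] at hcontr
      have hW : ∑ l : Fin n, ((if l = j then (1:ℝ) else 0) - 1/(n:ℝ))^2 = 1 - 1/(n:ℝ) := by
        rw [sum_sq_sub_const]
        have e1 : ∑ l : Fin n, (if l = j then (1:ℝ) else 0)^2 = 1 := by
          rw [Finset.sum_congr rfl (fun l _ => by
            rw [show ((if l = j then (1:ℝ) else 0))^2 = (if l = j then (1:ℝ) else 0) by
              split_ifs <;> norm_num])]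
          rw [Finset.sum_ite_eq' Finset.univ j (fun _ => (1:ℝ))]; simp
        have e2 : ∑ l : Fin n, (if l = j then (1:ℝ) else 0) = 1 := by
          rw [Finset.sum_ite_eq' Finset.univ j (fun _ => (1:ℝ))]; simp
        rw [e1, e2]
        field_simp
        ring
      rw [hW] at hcontr
      have hW1 : (1:ℝ) - 1/(n:ℝ) ≤ 1 := by
        have : (0:ℝ) ≤ 1/(n:ℝ) := by positivity
        linarith
      calc ∑ i, (A t i j - 1/(n:ℝ))^2
          ≤ (1 - 1/(2*(n:ℝ)^3)) * (1 - 1/(n:ℝ)) := hcontr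
        _ ≤ (1 - 1/(2*(n:ℝ)^3)) * 1 := mul_le_mul_of_nonneg_left hW1 hq0
        _ = (1 - 1/(2*(n:ℝ)^3))^(0+1) := by ring
  | succ m ih =>
    obtain ⟨ih1, ih2⟩ := ih
    have happ : ∀ i, prodA A t (m+1) i j = ∑ l, A (t+m+1) i l * prodA A t m l j := by
      intro i
      show (A (t + m + 1) * prodA A t m) i j = _
      rw [Matrix.mul_apply]
    constructor
    · rw [Finset.sum_congr rfl fun i _ => happ i, Finset.sum_comm]
      rw [Finset.sum_congr rfl (fun l (_ : l ∈ Finset.univ) => by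
        rw [← Finset.sum_mul, (hyp (t+m+1)).2.2.1 l, one_mul])]
      exact ih1
    · have hc : (n:ℝ) * (1/(n:ℝ)) = ∑ l, prodA A t m l j := by
        rw [← ih1]; field_simp
      have hcontr := contraction n hn (A (t+m+1)) (hyp _).1 (hyp _).2.1 (hyp _).2.2.1
        (hyp _).2.2.2.1 (hyp _).2.2.2.2 (fun l => prodA A t m l j) (1/(n:ℝ)) hc
      rw [Finset.sum_congr rfl fun i _ => by rw [happ i]]
      calc ∑ i, (∑ l, A (t+m+1) i l * prodA A t m l j - 1/(n:ℝ))^2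
          ≤ (1 - 1/(2*(n:ℝ)^3)) * ∑ l, (prodA A t m l j - 1/(n:ℝ))^2 := hcontr
        _ ≤ (1 - 1/(2*(n:ℝ)^3)) * (1 - 1/(2*(n:ℝ)^3))^(m+1) :=
            mul_le_mul_of_nonneg_left ih2 hq0
        _ = (1 - 1/(2*(n:ℝ)^3))^(m+1+1) := by ring

private lemma card_row {n : ℕ} (E : Finset (Fin n × Fin n)) (hloop : ∀ i : Fin n, (i, i) ∈ E)
    (j : Fin n) : (Finset.univ.filter fun i : Fin n => (j, i) ∈ E).card = outDeg E j + 1 := by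
  classical
  have h : (Finset.univ.filter fun i : Fin n => (j, i) ∈ E)
      = insert j (Finset.univ.filter fun i : Fin n => (j, i) ∈ E ∧ i ≠ j) := by
    ext i
    simp only [Finset.mem_filter, Finset.mem_insert, Finset.mem_univ, true_and]
    rcases eq_or_ne i j with rfl | hne
    · simp [hloop i]
    · simp [hne]
  rw [h, Finset.card_insert_of_notMem (by simp)]
  rfl

private lemma card_col {n : ℕ} (E : Finset (Fin n × Fin n)) (hloop : ∀ i : Fin n, (i, i) ∈ E)
    (j : Fin n) : (Finset.univ.filter fun i : Fin n => (i, j) ∈ E).card = inDeg E j + 1 := by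
  classical
  have h : (Finset.univ.filter fun i : Fin n => (i, j) ∈ E)
      = insert j (Finset.univ.filter fun i : Fin n => (i, j) ∈ E ∧ i ≠ j) := by
    ext i
    simp only [Finset.mem_filter, Finset.mem_insert, Finset.mem_univ, true_and]
    rcases eq_or_ne i j with rfl | hne
    · simp [hloop i]
    · simp [hne]
  rw [h, Finset.card_insert_of_notMem (by simp)]
  rfl

private lemma weightMatrix_good {n : ℕ} (hn : 1 ≤ n) (E : Finset (Fin n × Fin n))
    (hloop : ∀ i : Fin n, (i, i) ∈ E)
    (hreg : ∃ d : ℕ, (∀ j, outDeg E j = d) ∧ (∀ j, inDeg E j = d))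
    (hconn : StronglyConnected E) :
    GoodMatrix n (weightMatrix E) := by
  classical
  obtain ⟨d, hd, hd'⟩ := hreg
  have hpos : ∀ j i : Fin n, (j, i) ∈ E → weightMatrix E i j = 1 / ((outDeg E j : ℝ) + 1) := by
    intro j i hij
    simp [weightMatrix, hij]
  have hzero : ∀ j i : Fin n, (j, i) ∉ E → weightMatrix E i j = 0 := by
    intro j i hij
    simp [weightMatrix, hij]
  refine ⟨?_, ?_, ?_, ?_, ?_⟩
  · intro i j
    by_cases h : (j, i) ∈ E
    · rw [hpos j i h]; positivity
    · rw [hzero j i h]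
  · -- row sums
    intro i
    have : ∀ j : Fin n, weightMatrix E i j = if (j, i) ∈ E then 1 / ((d:ℝ) + 1) else 0 := by
      intro j
      by_cases h : (j, i) ∈ E
      · rw [hpos j i h, hd j, if_pos h]
      · rw [hzero j i h, if_neg h]
    rw [Finset.sum_congr rfl fun j _ => this j, ← Finset.sum_filter, Finset.sum_const,
      nsmul_eq_mul, card_col E hloop i, hd' i]
    have : ((d:ℝ) + 1) ≠ 0 := by positivity
    push_cast
    field_simp
  · -- column sums
    intro j
    have : ∀ i : Fin n, weightMatrix E i j = if (j, i) ∈ E then 1 / ((outDeg E j : ℝ) + 1) else 0 := by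
      intro i
      by_cases h : (j, i) ∈ E
      · rw [hpos j i h, if_pos h]
      · rw [hzero j i h, if_neg h]
    rw [Finset.sum_congr rfl fun i _ => this i, ← Finset.sum_filter, Finset.sum_const,
      nsmul_eq_mul, card_row E hloop j]
    have : ((outDeg E j : ℝ) + 1) ≠ 0 := by positivity
    push_cast
    field_simp
  · -- entry lower bound
    intro i j hne
    by_cases h : (j, i) ∈ E
    · rw [hpos j i h]
      have hle : outDeg E j + 1 ≤ n := by
        rw [← card_row E hloop j]
        simpa using Finset.card_filter_le Finset.univ (fun i : Fin n => (j, i) ∈ E)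
      have hle' : ((outDeg E j : ℝ) + 1) ≤ (n:ℝ) := by exact_mod_cast hle
      exact one_div_le_one_div_of_le (by positivity) hle'
    · exact absurd (hzero j i h) hne
  · -- cut property
    intro S hS1 hS2
    obtain ⟨a, ha⟩ := hS1
    have hb : ∃ b : Fin n, b ∉ S := by
      by_contra hcon
      push_neg at hcon
      exact hS2 (Finset.eq_univ_iff_forall.2 hcon)
    obtain ⟨b, hb⟩ := hb
    obtain ⟨u, v, hu, hv, huv⟩ := crossing (fun a b : Fin n => (a, b) ∈ E) (· ∈ S)
      (hconn a b) ha hb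
    refine ⟨v, ⟨u, hu, ?_⟩, ⟨v, Finset.mem_sdiff.2 ⟨Finset.mem_univ v, hv⟩, ?_⟩⟩
    · rw [hpos u v huv]
      positivity
    · rw [hpos v v (hloop v)]
      positivity

theorem column_stochastic_product_geometric_convergence_regular
    (n : ℕ) (hn : 1 ≤ n)
    (E : ℕ → Finset (Fin n × Fin n)) (hloop : ∀ k i, (i, i) ∈ E k)
    (hreg : ∀ k, ∃ d : ℕ, (∀ j, outDeg (E k) j = d) ∧ (∀ j, inDeg (E k) j = d))
    (hconn : ∀ k, StronglyConnected (E k))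
    (A : ℕ → Matrix (Fin n) (Fin n) ℝ) (hA : ∀ k, A k = weightMatrix (E k)) :
    ∃ φ : ℕ → Fin n → ℝ,
      (∀ k, (∀ i, 0 ≤ φ k i) ∧ ∑ i, φ k i = 1) ∧
      ∀ t k, t ≤ k → ∀ i j,
        |prodA A t (k - t) i j - φ k i|
          ≤ Real.sqrt 2 * (1 - 1 / (4 * (n : ℝ) ^ 3)) ^ (k - t) := by
  have hn' : (1:ℝ) ≤ (n:ℝ) := by exact_mod_cast hn
  have hnne : (n:ℝ) ≠ 0 := by intro h; rw [h] at hn'; linarith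
  have hcube : (1:ℝ) ≤ (n:ℝ)^3 := one_le_pow₀ hn'
  have hgood : ∀ k, GoodMatrix n (A k) := by
    intro k
    rw [hA k]
    exact weightMatrix_good hn (E k) (hloop k) (hreg k) (hconn k)
  refine ⟨fun _ _ => 1/(n:ℝ), fun k => ⟨fun i => by positivity, ?_⟩, ?_⟩
  · rw [Finset.sum_const, Finset.card_univ, Fintype.card_fin, nsmul_eq_mul]
    field_simp
  · intro t k htk i j
    set m := k - t with hm
    set q : ℝ := 1 - 1/(2*(n:ℝ)^3) with hqdef
    set r : ℝ := 1 - 1/(4*(n:ℝ)^3) with hrdef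
    have hq0 : (0:ℝ) ≤ q := by
      have h2 : (2:ℝ) ≤ 2*(n:ℝ)^3 := by nlinarith
      have := one_div_le_one_div_of_le (by norm_num : (0:ℝ) < 2) h2
      rw [hqdef]; linarith [this]
    have hq1 : q ≤ 1 := by
      have : (0:ℝ) ≤ 1/(2*(n:ℝ)^3) := by positivity
      rw [hqdef]; linarith
    have hr0 : (0:ℝ) ≤ r := by
      have h2 : (2:ℝ) ≤ 4*(n:ℝ)^3 := by nlinarith
      have := one_div_le_one_div_of_le (by norm_num : (0:ℝ) < 2) h2
      rw [hrdef]; linarith [this]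
    have hqr : q ≤ r^2 := by
      have : r^2 = q + (1/(4*(n:ℝ)^3))^2 := by
        rw [hqdef, hrdef]; field_simp; ring
      rw [this]
      nlinarith [sq_nonneg (1/(4*(n:ℝ)^3))]
    obtain ⟨hsum1, hV⟩ := iterate_bound n hn A hgood t j m
    have hterm : (prodA A t m i j - 1/(n:ℝ))^2 ≤ q^(m+1) := by
      rw [hqdef]
      exact le_trans (Finset.single_le_sum
        (f := fun i' => (prodA A t m i' j - 1/(n:ℝ))^2)
        (fun i' _ => sq_nonneg _) (Finset.mem_univ i)) hV
    have hchain : (prodA A t m i j - 1/(n:ℝ))^2 ≤ (r^m)^2 := by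
      calc (prodA A t m i j - 1/(n:ℝ))^2 ≤ q^(m+1) := hterm
        _ ≤ q^m := pow_le_pow_of_le_one hq0 hq1 (Nat.le_succ m)
        _ ≤ (r^2)^m := pow_le_pow_left₀ hq0 hqr m
        _ = (r^m)^2 := by rw [← pow_mul, ← pow_mul, Nat.mul_comm]
    have habs : |prodA A t m i j - 1/(n:ℝ)| ≤ r^m := by
      rw [← Real.sqrt_sq_eq_abs]
      calc Real.sqrt ((prodA A t m i j - 1/(n:ℝ))^2) ≤ Real.sqrt ((r^m)^2) :=
            Real.sqrt_le_sqrt hchain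
        _ = r^m := Real.sqrt_sq (pow_nonneg hr0 m)
    have hsqrt2 : (1:ℝ) ≤ Real.sqrt 2 := by
      rw [show (1:ℝ) = Real.sqrt 1 from (Real.sqrt_one).symm]
      exact Real.sqrt_le_sqrt (by norm_num)
    calc |prodA A t m i j - 1/(n:ℝ)| ≤ r^m := habs
      _ ≤ Real.sqrt 2 * r^m := le_mul_of_one_le_left (pow_nonneg hr0 m) hsqrt2
end
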